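/- Let G be a finite connected multigraph with non-trivial vertex partition Π, and T_τ a trans-block ordered spanning tree of G. Then for every u ∈ [0,1]^{|V|−1}, the contact matrix X^{Π,T_τ}(u) with entries X_{v,v'}(u) = ∏_{i(v,v') < k ≤ j(v,v')} u_k (and diagonal entries 1) is symmetric positive semidefinite. -/

import Mathlib

open scoped Classical
open MeasureTheory

/-- A multigraph on vertex type `V` with edge type `E`: each edge has an
unordered pair of endpoints (self-loops and multiple edges allowed). -/
structure Multigraph (V E : Type) where
  ends : E → Sym2 V

namespace Multigraph

variable {V E : Type}

/-- Two vertices are connected using only edges in the subset `S`. -/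
def Connects (G : Multigraph V E) (S : Finset E) (v w : V) : Prop :=
  Relation.ReflTransGen (fun a b => ∃ e ∈ S, G.ends e = s(a, b)) v w

/-- The multigraph is connected. -/
def IsConnected (G : Multigraph V E) [Fintype E] : Prop :=
  ∀ v w : V, G.Connects Finset.univ v w

/-- A spanning tree: a spanning connected edge subset with `|V| - 1` edges. -/
def IsSpanningTree (G : Multigraph V E) [Fintype V] [Fintype E] (T : Finset E) : Prop :=
  (∀ v w : V, G.Connects T v w) ∧ T.card = Fintype.card V - 1

/-- Kruskal's greedy algorithm: process the edges in increasing order of the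
Hepp sector `σ`, inserting an edge iff it does not create a cycle (i.e. iff
its endpoints are not yet connected by the edges selected so far). -/
noncomputable def kruskal (G : Multigraph V E) [Fintype E]
    (σ : E ≃ Fin (Fintype.card E)) : Finset E :=
  ((List.finRange (Fintype.card E)).map σ.symm).foldl
    (fun S e => if ∀ a b, G.ends e = s(a, b) → ¬ G.Connects S a b then insert e S else S) ∅

/-- The symmetric weight `w_s(G,T)`: the fraction of Hepp sectors for which
`T` is the Kruskal leading tree. -/
noncomputable def ws (G : Multigraph V E) [Fintype V] [Fintype E] (T : Finset E) : ℚ :=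
  (Fintype.card {σ : E ≃ Fin (Fintype.card E) // G.kruskal σ = T} : ℚ) /
    (Nat.factorial (Fintype.card E) : ℚ)

/-- Updating the merge relation (which vertices have been identified) after
contracting the edge `e`: the equivalence closure of `M` together with the
pair of endpoints of `e`. -/
def mergeStep (G : Multigraph V E) (M : V → V → Prop) (e : E) : V → V → Prop :=
  Relation.EqvGen (fun a b => M a b ∨ G.ends e = s(a, b))

/-- Updating the block (partition) relation after contracting the trans-block
edge `e`: the new merged vertex forms a singleton block, the endpoints of `e`
are removed from their old blocks, and all other blocks are unchanged. -/
def blockStep (G : Multigraph V E) (M B : V → V → Prop) (e : E) : V → V → Prop :=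
  fun x y => ∀ a b, G.ends e = s(a, b) →
    ((G.mergeStep M e x a ∧ G.mergeStep M e y a) ∨
      (B x y ∧ ¬ G.mergeStep M e x a ∧ ¬ G.mergeStep M e y a))

/-- One contraction step on the pair (merge relation, block relation). -/
def stepPair (G : Multigraph V E) (s : (V → V → Prop) × (V → V → Prop)) (e : E) :
    (V → V → Prop) × (V → V → Prop) :=
  (G.mergeStep s.1 e, G.blockStep s.1 s.2 e)

/-- The state (merge relation, block relation) after contracting, in order,
the edges of the list `L`, starting from the discrete merge relation `Eq` and
initial block (partition) relation `B0`. -/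
def state (G : Multigraph V E) (B0 : V → V → Prop) (L : List E) :
    (V → V → Prop) × (V → V → Prop) :=
  L.foldl G.stepPair (Eq, B0)

/-- An edge is trans-block for the block relation `B` if its endpoints lie in
distinct blocks (in particular it is not a self-loop, even after merging). -/
def TransBlock (G : Multigraph V E) (B : V → V → Prop) (e : E) : Prop :=
  ∀ a b, G.ends e = s(a, b) → ¬ B a b

/-- The ordered list of edges `L` is a trans-block ordered forest for the
initial partition `B0`: each successive edge is trans-block for the
successively contracted partition. -/
def IsTransBlockSeq (G : Multigraph V E) (B0 : V → V → Prop) (L : List E) : Prop :=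
  ∀ p (h : p < L.length), G.TransBlock (G.state B0 (L.take p)).2 (L.get ⟨p, h⟩)

/-- `k_p`: the number of trans-block edges of the `p`-th contracted graph for
the `p`-th contracted partition (already-contracted edges are self-loops of
the contracted graph, hence never trans-block). -/
noncomputable def kcount (G : Multigraph V E) [Fintype E] (B0 : V → V → Prop)
    (L : List E) (p : ℕ) : ℕ :=
  (Finset.univ.filter fun e => G.TransBlock (G.state B0 (L.take p)).2 e).card

/-- First contact index `i(v,v')`: smallest `p` such that `v, v'` lie in
different blocks of `Π_p` (with the convention `i(v,v) = -1, j(v,v) = 0`,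
realized here by taking `i(v,v) = j(v,v) = 0`, which makes the corresponding
products empty, as in the convention `X_{v,v} = 1`). -/
noncomputable def iIdx (G : Multigraph V E) (B0 : V → V → Prop) (L : List E)
    (v v' : V) : ℕ :=
  if v = v' then 0 else sInf {p | ¬ (G.state B0 (L.take p)).2 v v'}

/-- Second contact index `j(v,v')`: smallest `p` such that `v, v'` have been
merged into a single vertex of `G_p`. -/
noncomputable def jIdx (G : Multigraph V E) (B0 : V → V → Prop) (L : List E)
    (v v' : V) : ℕ :=
  sInf {p | (G.state B0 (L.take p)).1 v v'}

/-- Entry of the contact matrix: `X_{v,v'}(u) = ∏_{i(v,v') < k ≤ j(v,v')} u_k`,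
where the variable `u_k` (1 ≤ k ≤ |V|-1) is represented by `w ⟨k-1⟩`. -/
noncomputable def Xent (G : Multigraph V E) (B0 : V → V → Prop) (L : List E)
    (n : ℕ) (w : Fin n → ℝ) (v v' : V) : ℝ :=
  ∏ k : Fin n,
    if G.iIdx B0 L v v' ≤ (k : ℕ) ∧ (k : ℕ) < G.jIdx B0 L v v' then w k else 1

/-- Contact-matrix factor `X_{v(ℓ),v'(ℓ)}(u)` of a (loop) edge `ℓ`. -/
noncomputable def XentE (G : Multigraph V E) (B0 : V → V → Prop) (L : List E)
    (n : ℕ) (w : Fin n → ℝ) (e : E) : ℝ :=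
  ∏ k : Fin n,
    if (∀ a b, G.ends e = s(a, b) →
        (G.iIdx B0 L a b ≤ (k : ℕ) ∧ (k : ℕ) < G.jIdx B0 L a b)) then w k else 1

/-- Tree edge factor `Y_ℓ(u) = ∏_{i(v(ℓ),v'(ℓ)) < k < j(v(ℓ),v'(ℓ))} u_k`. -/
noncomputable def Yent (G : Multigraph V E) (B0 : V → V → Prop) (L : List E)
    (n : ℕ) (w : Fin n → ℝ) (e : E) : ℝ :=
  ∏ k : Fin n,
    if (∀ a b, G.ends e = s(a, b) →
        (G.iIdx B0 L a b ≤ (k : ℕ) ∧ (k : ℕ) + 1 < G.jIdx B0 L a b)) then w k else 1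

/-- The weight `∏_{p=0}^{|V|-2} 1/k_p` of a trans-block ordered tree, and `0`
for a non-admissible ordering. -/
noncomputable def wOrd (G : Multigraph V E) [Fintype V] [Fintype E]
    (B0 : V → V → Prop) (L : List E) : ℚ :=
  if G.IsTransBlockSeq B0 L then
    ∏ p ∈ Finset.range (Fintype.card V - 1), ((G.kcount B0 L p : ℚ))⁻¹
  else 0

/-- The partition tree weight `w^Π(G,T)`: the sum over all admissible
orderings `τ` of `T` of `∏_{p=0}^{|V|-2} 1/k_p(T_τ)`. -/
noncomputable def wPi (G : Multigraph V E) [Fintype V] [Fintype E]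
    (B0 : V → V → Prop) (T : Finset E) : ℚ :=
  ∑ τ : Fin T.card ≃ {e // e ∈ T}, G.wOrd B0 (List.ofFn fun i => ((τ i : E)))

end Multigraph
section ContactAux

open Multigraph

variable {V E : Type}

/-- The merge relation after `p` contraction steps. -/
def Mst (G : Multigraph V E) (B0 : V → V → Prop) (L : List E) (p : ℕ) : V → V → Prop :=
  (G.state B0 (L.take p)).1

/-- The block relation after `p` contraction steps. -/
def Bst (G : Multigraph V E) (B0 : V → V → Prop) (L : List E) (p : ℕ) : V → V → Prop :=
  (G.state B0 (L.take p)).2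

variable {G : Multigraph V E} {B0 : V → V → Prop} {L : List E}

lemma sym2_exists (z : Sym2 V) : ∃ a b, z = s(a, b) := by
  induction z using Sym2.ind with | _ a b => exact ⟨a, b, rfl⟩

lemma state_take_succ (p : ℕ) (h : p < L.length) :
    G.state B0 (L.take (p + 1)) = G.stepPair (G.state B0 (L.take p)) (L.get ⟨p, h⟩) := by
  unfold Multigraph.state
  rw [List.take_succ, List.getElem?_eq_getElem h, List.foldl_append]
  rfl

lemma take_stall (p : ℕ) (h : L.length ≤ p) : L.take (p + 1) = L.take p := by
  rw [List.take_of_length_le h, List.take_of_length_le (le_trans h (Nat.le_succ p))]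

/-- `mergeStep` is an equivalence. -/
lemma mergeStep_equiv (M : V → V → Prop) (e : E) : Equivalence (G.mergeStep M e) :=
  Relation.EqvGen.is_equivalence _

lemma mergeStep_mono {M : V → V → Prop} {e : E} {x y : V} (h : M x y) :
    G.mergeStep M e x y := Relation.EqvGen.rel _ _ (Or.inl h)

lemma mergeStep_ends {M : V → V → Prop} {e : E} {a b : V} (h : G.ends e = s(a, b)) :
    G.mergeStep M e a b := Relation.EqvGen.rel _ _ (Or.inr h)

/-- Decomposition of the merge closure: a new merge comes through the endpoints. -/
lemma mergeStep_cases {M : V → V → Prop} (hM : Equivalence M) {e : E} {a b : V}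
    (hab : G.ends e = s(a, b)) {x y : V} (h : G.mergeStep M e x y) :
    M x y ∨ (M x a ∧ M y b) ∨ (M x b ∧ M y a) := by
  have tr : ∀ {x y z : V}, M x y → M y z → M x z := fun h1 h2 => hM.trans h1 h2
  have sy : ∀ {x y : V}, M x y → M y x := fun h1 => hM.symm h1
  induction h with
  | rel u v huv =>
    rcases huv with h' | h'
    · exact Or.inl h'
    · rw [hab] at h'
      rw [Sym2.eq_iff] at h'
      rcases h' with ⟨ha, hb⟩ | ⟨ha, hb⟩
      · exact Or.inr (Or.inl ⟨ha ▸ hM.refl u, hb ▸ hM.refl v⟩)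
      · exact Or.inr (Or.inr ⟨hb ▸ hM.refl u, ha ▸ hM.refl v⟩)
  | refl u => exact Or.inl (hM.refl u)
  | symm u v _ ih =>
    rcases ih with h1 | ⟨h1, h2⟩ | ⟨h1, h2⟩
    · exact Or.inl (sy h1)
    · exact Or.inr (Or.inr ⟨h2, h1⟩)
    · exact Or.inr (Or.inl ⟨h2, h1⟩)
  | trans u v z _ _ ih1 ih2 =>
    rcases ih1 with h1 | ⟨h1a, h1b⟩ | ⟨h1a, h1b⟩ <;>
      rcases ih2 with h2 | ⟨h2a, h2b⟩ | ⟨h2a, h2b⟩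
    · exact Or.inl (tr h1 h2)
    · exact Or.inr (Or.inl ⟨tr h1 h2a, h2b⟩)
    · exact Or.inr (Or.inr ⟨tr h1 h2a, h2b⟩)
    · exact Or.inr (Or.inl ⟨h1a, tr (sy h2) h1b⟩)
    · exact Or.inl (tr h1a (tr (tr (sy h2a) h1b) (sy h2b)))
    · exact Or.inl (tr h1a (sy h2b))
    · exact Or.inr (Or.inr ⟨h1a, tr (sy h2) h1b⟩)
    · exact Or.inl (tr h1a (sy h2b))
    · exact Or.inl (tr (tr (tr h1a (sy h2a)) h1b) (sy h2b))

/-- `blockStep` preserves equivalences. -/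
lemma blockStep_equiv {M B : V → V → Prop} (hB : Equivalence B) (e : E) :
    Equivalence (G.blockStep M B e) := by
  constructor
  · intro x a b hab
    by_cases h : G.mergeStep M e x a
    · exact Or.inl ⟨h, h⟩
    · exact Or.inr ⟨hB.refl x, h, h⟩
  · intro x y h a b hab
    rcases h a b hab with ⟨h1, h2⟩ | ⟨h1, h2, h3⟩
    · exact Or.inl ⟨h2, h1⟩
    · exact Or.inr ⟨hB.symm h1, h3, h2⟩
  · intro x y z hxy hyz a b hab
    rcases hxy a b hab with ⟨h1, h2⟩ | ⟨h1, h2, h3⟩ <;>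
      rcases hyz a b hab with ⟨g1, g2⟩ | ⟨g1, g2, g3⟩
    · exact Or.inl ⟨h1, g2⟩
    · exact absurd h2 g2
    · exact absurd g1 h3
    · exact Or.inr ⟨hB.trans h1 g1, h2, g3⟩

/-- merged vertices are in the same block after a step. -/
lemma blockStep_of_mergeStep {M B : V → V → Prop} (hM : Equivalence M)
    (hMB : ∀ x y, M x y → B x y) (e : E) {x y : V} (h : G.mergeStep M e x y) :
    G.blockStep M B e x y := by
  intro a b hab
  have heq := mergeStep_equiv (G := G) M e
  by_cases hxa : G.mergeStep M e x a
  · exact Or.inl ⟨hxa, heq.trans (heq.symm h) hxa⟩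
  · refine Or.inr ⟨?_, hxa, fun hya => hxa (heq.trans h hya)⟩
    rcases mergeStep_cases hM hab h with h' | ⟨h', _⟩ | ⟨h', _⟩
    · exact hMB _ _ h'
    · exact absurd (mergeStep_mono h') hxa
    · exact absurd (heq.trans (mergeStep_mono h') (heq.symm (mergeStep_ends hab))) hxa

/-- Blocks only shrink, except by merging. -/
lemma blockStep_shrink {M B : V → V → Prop} {e : E} {x y : V}
    (h : G.blockStep M B e x y) : B x y ∨ G.mergeStep M e x y := by
  obtain ⟨a, b, hab⟩ := sym2_exists (G.ends e)
  have heq := mergeStep_equiv (G := G) M e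
  rcases h a b hab with ⟨h1, h2⟩ | ⟨h1, _, _⟩
  · exact Or.inr (heq.trans h1 (heq.symm h2))
  · exact Or.inl h1

/-- The invariant along the contraction. -/
lemma state_invariant (hB0 : Equivalence B0) (p : ℕ) :
    Equivalence (Mst G B0 L p) ∧ Equivalence (Bst G B0 L p) ∧
      ∀ x y, Mst G B0 L p x y → Bst G B0 L p x y := by
  induction p with
  | zero =>
    refine ⟨?_, ?_, ?_⟩ <;> simp only [Mst, Bst, Multigraph.state, List.take_zero, List.foldl_nil]
    · exact eq_equivalence
    · exact hB0
    · exact fun x y h => h ▸ hB0.refl x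
  | succ p ih =>
    obtain ⟨hM, hB, hMB⟩ := ih
    by_cases h : p < L.length
    · have hst := state_take_succ (G := G) (B0 := B0) p h
      refine ⟨?_, ?_, ?_⟩ <;> simp only [Mst, Bst, hst, Multigraph.stepPair]
      · exact mergeStep_equiv _ _
      · exact blockStep_equiv hB _
      · exact fun x y hxy => blockStep_of_mergeStep hM hMB _ hxy
    · have hst : L.take (p + 1) = L.take p := take_stall p (le_of_not_gt h)
      refine ⟨?_, ?_, ?_⟩ <;> simp only [Mst, Bst, hst]
      exacts [hM, hB, hMB]

lemma Mst_succ_of (p : ℕ) {x y : V} (h : Mst G B0 L p x y) : Mst G B0 L (p + 1) x y := by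
  by_cases hp : p < L.length
  · have hst := state_take_succ (G := G) (B0 := B0) p hp
    simp only [Mst, hst, Multigraph.stepPair]
    exact mergeStep_mono h
  · have hst : L.take (p + 1) = L.take p := take_stall p (le_of_not_gt hp)
    simpa only [Mst, hst] using h

lemma Mst_mono {p q : ℕ} (hpq : p ≤ q) {x y : V} (h : Mst G B0 L p x y) :
    Mst G B0 L q x y := by
  induction q, hpq using Nat.le_induction with
  | base => exact h
  | succ q hq ih => exact Mst_succ_of q ih

lemma Bst_succ_shrink (p : ℕ) {x y : V} (h : Bst G B0 L (p + 1) x y) :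
    Bst G B0 L p x y ∨ Mst G B0 L (p + 1) x y := by
  by_cases hp : p < L.length
  · have hst := state_take_succ (G := G) (B0 := B0) p hp
    simp only [Bst, Mst, hst, Multigraph.stepPair] at h ⊢
    exact blockStep_shrink h
  · have hst : L.take (p + 1) = L.take p := take_stall p (le_of_not_gt hp)
    simp only [Bst, hst] at h
    exact Or.inl h

end ContactAux
section ContactChar

open Multigraph

variable {V E : Type} {G : Multigraph V E} {B0 : V → V → Prop} {L : List E}

lemma not_B_of_new_merge (hB0 : Equivalence B0) (hTB : G.IsTransBlockSeq B0 L)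
    (p : ℕ) (hp : p < L.length) {x y : V}
    (h1 : ¬ Mst G B0 L p x y) (h2 : Mst G B0 L (p + 1) x y) : ¬ Bst G B0 L p x y := by
  obtain ⟨hM, hB, hMB⟩ := state_invariant (G := G) (L := L) hB0 p
  obtain ⟨a, b, hab⟩ := sym2_exists (G.ends (L.get ⟨p, hp⟩))
  have hst := state_take_succ (G := G) (B0 := B0) p hp
  simp only [Mst, hst, Multigraph.stepPair] at h2
  intro hBxy
  have htb := hTB p hp
  simp only [Mst] at hM h1
  simp only [Bst] at hB hBxy
  simp only [Mst, Bst] at hMB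
  rcases mergeStep_cases hM hab h2 with h' | ⟨ha, hb⟩ | ⟨ha, hb⟩
  · exact h1 h'
  · exact htb a b hab (hB.trans (hB.symm (hMB _ _ ha)) (hB.trans hBxy (hMB _ _ hb)))
  · exact htb a b hab
      (hB.trans (hB.symm (hMB _ _ hb)) (hB.trans (hB.symm hBxy) (hMB _ _ ha)))

lemma contact_char (hB0 : Equivalence B0) (hTB : G.IsTransBlockSeq B0 L)
    (hspan : ∀ v w : V, (G.state B0 L).1 v w) (v v' : V) (p : ℕ) :
    (G.iIdx B0 L v v' ≤ p ∧ p < G.jIdx B0 L v v') ↔ ¬ Bst G B0 L p v v' := by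
  by_cases hvv : v = v'
  · subst hvv
    have hBp := (state_invariant (G := G) (L := L) hB0 p).2.1
    have hj : G.jIdx B0 L v v = 0 := by
      have h0 : (0 : ℕ) ∈ {q | (G.state B0 (L.take q)).1 v v} := by
        simp [Multigraph.state]
      exact Nat.sInf_eq_zero.2 (Or.inl h0)
    have hrefl : (G.state B0 (L.take p)).2 v v := hBp.refl v
    simp [hj, Bst, hrefl]
  · have hMn : L.length ∈ {q | (G.state B0 (L.take q)).1 v v'} := by
      simpa [List.take_length] using hspan v v'
    have hSM : {q | (G.state B0 (L.take q)).1 v v'}.Nonempty := ⟨_, hMn⟩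
    have hjmem : Mst G B0 L (G.jIdx B0 L v v') v v' := Nat.sInf_mem hSM
    have hjle : G.jIdx B0 L v v' ≤ L.length := Nat.sInf_le hMn
    have hj1 : G.jIdx B0 L v v' ≠ 0 := by
      intro h0
      have h := hjmem
      rw [h0] at h
      simp only [Mst, Multigraph.state, List.take_zero, List.foldl_nil] at h
      exact hvv h
    obtain ⟨pj, hpj⟩ : ∃ pj, G.jIdx B0 L v v' = pj + 1 :=
      ⟨_, (Nat.succ_pred_eq_of_ne_zero hj1).symm⟩
    have hnotMpj : ¬ Mst G B0 L pj v v' := by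
      have := Nat.notMem_of_lt_sInf (s := {q | (G.state B0 (L.take q)).1 v v'})
        (show pj < G.jIdx B0 L v v' by omega)
      exact this
    have hpjlen : pj < L.length := by omega
    have hnotBpj : ¬ Bst G B0 L pj v v' :=
      not_B_of_new_merge hB0 hTB pj hpjlen hnotMpj (hpj ▸ hjmem)
    have hSB : {q | ¬ (G.state B0 (L.take q)).2 v v'}.Nonempty := ⟨pj, hnotBpj⟩
    have hi_def : G.iIdx B0 L v v' = sInf {q | ¬ (G.state B0 (L.take q)).2 v v'} :=
      if_neg hvv
    have himem : ¬ Bst G B0 L (G.iIdx B0 L v v') v v' := by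
      rw [hi_def]; exact Nat.sInf_mem hSB
    constructor
    · rintro ⟨h1, h2⟩
      have main : ∀ q, G.iIdx B0 L v v' ≤ q → q < G.jIdx B0 L v v' →
          ¬ Bst G B0 L q v v' := by
        intro q hq
        induction q, hq using Nat.le_induction with
        | base => exact fun _ => himem
        | succ q hq ih =>
          intro hlt
          have hBq := ih (by omega)
          have hnotM : ¬ Mst G B0 L (q + 1) v v' :=
            Nat.notMem_of_lt_sInf (s := {r | (G.state B0 (L.take r)).1 v v'}) hlt
          intro hB1
          rcases Bst_succ_shrink q hB1 with h | h
          · exact hBq h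
          · exact hnotM h
      exact main p h1 h2
    · intro hnB
      refine ⟨by rw [hi_def]; exact Nat.sInf_le hnB, ?_⟩
      by_contra hge
      push_neg at hge
      have hMp : Mst G B0 L p v v' := Mst_mono hge hjmem
      exact hnB ((state_invariant (G := G) (L := L) hB0 p).2.2 _ _ hMp)

lemma Bst_symm (hB0 : Equivalence B0) (p : ℕ) {x y : V} (h : Bst G B0 L p x y) :
    Bst G B0 L p y x := (state_invariant (G := G) (L := L) hB0 p).2.1.symm h

lemma iIdx_symm (hB0 : Equivalence B0) (v v' : V) :
    G.iIdx B0 L v v' = G.iIdx B0 L v' v := by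
  unfold Multigraph.iIdx
  by_cases h : v = v'
  · subst h; rfl
  · rw [if_neg h, if_neg (fun h' => h h'.symm)]
    congr 1
    ext q
    simp only [Set.mem_setOf_eq]
    constructor <;> intro hq hB <;> exact hq (Bst_symm hB0 q hB)

lemma jIdx_symm (hB0 : Equivalence B0) (v v' : V) :
    G.jIdx B0 L v v' = G.jIdx B0 L v' v := by
  unfold Multigraph.jIdx
  congr 1
  ext q
  simp only [Set.mem_setOf_eq]
  constructor <;> intro hq <;>
    exact (state_invariant (G := G) (L := L) hB0 q).1.symm hq

end ContactChar
section PSDAux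

open Finset

lemma equiv_indicator_nonneg {V : Type} [Fintype V] {R : V → V → Prop}
    (hR : Equivalence R) (y : V → ℝ) :
    0 ≤ ∑ v : V, ∑ v' : V, (if R v v' then (1 : ℝ) else 0) * (y v * y v') := by
  classical
  set c : V → ℝ := fun x => ((Finset.univ.filter fun u => R u x).card : ℝ) with hc
  have key : ∀ v v' : V, (if R v v' then (1 : ℝ) else 0) =
      ∑ x : V, ((if R v x then (1 : ℝ) else 0) * (if R v' x then 1 else 0)) / c x := by
    intro v v'
    by_cases h : R v v'
    · rw [if_pos h]
      have hiff : ∀ x, R v' x ↔ R v x :=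
        fun x => ⟨fun hx => hR.trans h hx, fun hx => hR.trans (hR.symm h) hx⟩
      have step1 : ∀ x : V, ((if R v x then (1 : ℝ) else 0) * (if R v' x then 1 else 0)) / c x
          = if R v x then (c v)⁻¹ else 0 := by
        intro x
        by_cases hx : R v x
        · have hset : (Finset.univ.filter fun u => R u x) =
              Finset.univ.filter fun u => R u v := by
            ext u
            simp only [Finset.mem_filter, Finset.mem_univ, true_and]
            exact ⟨fun h' => hR.trans h' (hR.symm hx), fun h' => hR.trans h' hx⟩
          simp [hx, (hiff x).2 hx, hc, hset, div_eq_mul_inv]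
        · simp [hx]
      rw [Finset.sum_congr rfl fun x _ => step1 x]
      rw [← Finset.sum_filter]
      rw [Finset.sum_const, nsmul_eq_mul]
      have hcard : (Finset.univ.filter fun x => R v x) = Finset.univ.filter fun u => R u v := by
        ext u
        simp only [Finset.mem_filter, Finset.mem_univ, true_and]
        exact ⟨fun h' => hR.symm h', fun h' => hR.symm h'⟩
      rw [hcard]
      have hne : c v ≠ 0 := by
        have : v ∈ Finset.univ.filter fun u => R u v := by
          simp [hR.refl v]
        have hpos : 0 < (Finset.univ.filter fun u => R u v).card := Finset.card_pos.2 ⟨v, this⟩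
        simp only [hc]
        positivity
      rw [hc]
      exact (mul_inv_cancel₀ hne).symm
    · rw [if_neg h]
      symm
      refine Finset.sum_eq_zero fun x _ => ?_
      by_cases h1 : R v x
      · have h2 : ¬ R v' x := fun h2 => h (hR.trans h1 (hR.symm h2))
        simp [h2]
      · simp [h1]
  have hmain : ∑ v : V, ∑ v' : V, (if R v v' then (1 : ℝ) else 0) * (y v * y v')
      = ∑ x : V, (∑ v : V, (if R v x then (1 : ℝ) else 0) * y v) ^ 2 / c x := by
    calc ∑ v : V, ∑ v' : V, (if R v v' then (1 : ℝ) else 0) * (y v * y v')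
        = ∑ v : V, ∑ v' : V, ∑ x : V,
            (((if R v x then (1 : ℝ) else 0) * y v) * ((if R v' x then (1 : ℝ) else 0) * y v')) / c x := by
          refine Finset.sum_congr rfl fun v _ => Finset.sum_congr rfl fun v' _ => ?_
          rw [key v v', Finset.sum_mul]
          exact Finset.sum_congr rfl fun x _ => by ring
      _ = ∑ v : V, ∑ x : V, ∑ v' : V,
            (((if R v x then (1 : ℝ) else 0) * y v) * ((if R v' x then (1 : ℝ) else 0) * y v')) / c x :=
          Finset.sum_congr rfl fun v _ => Finset.sum_comm
      _ = ∑ x : V, ∑ v : V, ∑ v' : V,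
            (((if R v x then (1 : ℝ) else 0) * y v) * ((if R v' x then (1 : ℝ) else 0) * y v')) / c x :=
          Finset.sum_comm
      _ = ∑ x : V, (∑ v : V, (if R v x then (1 : ℝ) else 0) * y v) ^ 2 / c x := by
          refine Finset.sum_congr rfl fun x _ => ?_
          rw [sq, Finset.sum_mul_sum, Finset.sum_div]
          exact Finset.sum_congr rfl fun v _ => (Finset.sum_div _ _ _).symm
  rw [hmain]
  refine Finset.sum_nonneg fun x _ => div_nonneg (sq_nonneg _) ?_
  simp only [hc]
  exact Nat.cast_nonneg _

end PSDAux
/-- for every `u ∈ [0,1]^{|V|-1}`, the contact matrix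
`X^{Π,T_τ}(u)` of a trans-block ordered spanning tree `T_τ` is symmetric
positive semidefinite (its diagonal entries being `1`). -/
theorem contact_matrix_posSemidef
    {V E : Type} [Fintype V] [Fintype E] [Nonempty V] [DecidableEq V]
    (G : Multigraph V E) (hG : G.IsConnected)
    (B0 : V → V → Prop) (hB0 : Equivalence B0)
    (hnt : ∃ v w : V, ¬ B0 v w)
    (L : List E) (hlen : L.length = Fintype.card V - 1) (hnd : L.Nodup)
    (hTB : G.IsTransBlockSeq B0 L)
    (hspan : ∀ v w : V, (G.state B0 L).1 v w)
    (w : Fin (Fintype.card V - 1) → ℝ) (hw : ∀ k, w k ∈ Set.Icc (0 : ℝ) 1) :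
    (Matrix.of fun v v' : V =>
        G.Xent B0 L (Fintype.card V - 1) w v v').PosSemidef := by
  classical
  have expand : ∀ v v' : V, G.Xent B0 L (Fintype.card V - 1) w v v' =
      ∑ t ∈ (Finset.univ : Finset (Fin (Fintype.card V - 1))).powerset,
        ((∏ k ∈ t, w k) * ∏ k ∈ Finset.univ \ t, (1 - w k)) *
          (if ∀ k ∈ Finset.univ \ t, (G.state B0 (L.take ((k : Fin (Fintype.card V - 1)) : ℕ))).2 v v'
            then (1 : ℝ) else 0) := by
    intro v v'
    unfold Multigraph.Xent
    have hfac : ∀ k : Fin (Fintype.card V - 1),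
        (if G.iIdx B0 L v v' ≤ (k : ℕ) ∧ (k : ℕ) < G.jIdx B0 L v v' then w k else 1)
          = w k + (if (G.state B0 (L.take (k : ℕ))).2 v v' then 1 - w k else 0) := by
      intro k
      have hch := contact_char hB0 hTB hspan v v' (k : ℕ)
      by_cases hb : (G.state B0 (L.take (k : ℕ))).2 v v'
      · rw [if_neg (fun hcnd => (hch.1 hcnd) hb), if_pos hb]
        ring
      · rw [if_pos (hch.2 hb), if_neg hb]
        ring
    rw [Finset.prod_congr rfl fun k _ => hfac k, Finset.prod_add]
    refine Finset.sum_congr rfl fun t ht => ?_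
    have hfac2 : ∀ k : Fin (Fintype.card V - 1),
        (if (G.state B0 (L.take (k : ℕ))).2 v v' then 1 - w k else (0 : ℝ))
          = (1 - w k) * (if (G.state B0 (L.take (k : ℕ))).2 v v' then 1 else 0) := by
      intro k
      by_cases hb : (G.state B0 (L.take (k : ℕ))).2 v v' <;> simp [hb]
    rw [Finset.prod_congr rfl fun k _ => hfac2 k, Finset.prod_mul_distrib,
      Finset.prod_boole]
    ring
  have hsym : ∀ v v' : V, G.Xent B0 L (Fintype.card V - 1) w v v' = G.Xent B0 L (Fintype.card V - 1) w v' v := by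
    intro v v'
    unfold Multigraph.Xent
    rw [iIdx_symm hB0 v v', jIdx_symm hB0 v v']
  rw [Matrix.posSemidef_iff_dotProduct_mulVec]
  constructor
  · unfold Matrix.IsHermitian
    ext v v'
    simp only [Matrix.conjTranspose_apply, Matrix.of_apply, star_trivial]
    exact hsym v' v
  · intro y
    simp only [dotProduct, Matrix.mulVec, Matrix.of_apply, Pi.star_apply,
      star_trivial]
    have hA : ∀ t : Finset (Fin (Fintype.card V - 1)),
        0 ≤ (∏ k ∈ t, w k) * ∏ k ∈ Finset.univ \ t, (1 - w k) :=
      fun t => mul_nonneg (Finset.prod_nonneg fun k _ => (hw k).1)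
        (Finset.prod_nonneg fun k _ => by linarith [(hw k).2])
    have hRt : ∀ t : Finset (Fin (Fintype.card V - 1)),
        Equivalence (fun v v' : V =>
          ∀ k ∈ Finset.univ \ t, (G.state B0 (L.take ((k : Fin (Fintype.card V - 1)) : ℕ))).2 v v') := by
      intro t
      constructor
      · intro v k hk
        exact ((state_invariant (G := G) (L := L) hB0 (k : ℕ)).2.1).refl v
      · intro v v' h k hk
        exact ((state_invariant (G := G) (L := L) hB0 (k : ℕ)).2.1).symm (h k hk)
      · intro a b c h1 h2 k hk
        exact ((state_invariant (G := G) (L := L) hB0 (k : ℕ)).2.1).trans (h1 k hk) (h2 k hk)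
    have heq : ∑ v : V, y v * ∑ v' : V, G.Xent B0 L (Fintype.card V - 1) w v v' * y v'
        = ∑ t ∈ (Finset.univ : Finset (Fin (Fintype.card V - 1))).powerset,
            ((∏ k ∈ t, w k) * ∏ k ∈ Finset.univ \ t, (1 - w k)) *
              ∑ v : V, ∑ v' : V,
                (if ∀ k ∈ Finset.univ \ t, (G.state B0 (L.take ((k : Fin (Fintype.card V - 1)) : ℕ))).2 v v'
                  then (1 : ℝ) else 0) * (y v * y v') := by
      calc ∑ v : V, y v * ∑ v' : V, G.Xent B0 L (Fintype.card V - 1) w v v' * y v'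
          = ∑ v : V, ∑ v' : V, y v * (G.Xent B0 L (Fintype.card V - 1) w v v' * y v') :=
            Finset.sum_congr rfl fun v _ => Finset.mul_sum _ _ _
        _ = ∑ v : V, ∑ v' : V, ∑ t ∈ (Finset.univ : Finset (Fin (Fintype.card V - 1))).powerset,
              ((∏ k ∈ t, w k) * ∏ k ∈ Finset.univ \ t, (1 - w k)) *
                ((if ∀ k ∈ Finset.univ \ t, (G.state B0 (L.take ((k : Fin (Fintype.card V - 1)) : ℕ))).2 v v'
                  then (1 : ℝ) else 0) * (y v * y v')) := by
            refine Finset.sum_congr rfl fun v _ => Finset.sum_congr rfl fun v' _ => ?_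
            rw [expand v v', Finset.sum_mul, Finset.mul_sum]
            refine Finset.sum_congr rfl fun t _ => by ring
        _ = ∑ v : V, ∑ t ∈ (Finset.univ : Finset (Fin (Fintype.card V - 1))).powerset, ∑ v' : V,
              ((∏ k ∈ t, w k) * ∏ k ∈ Finset.univ \ t, (1 - w k)) *
                ((if ∀ k ∈ Finset.univ \ t, (G.state B0 (L.take ((k : Fin (Fintype.card V - 1)) : ℕ))).2 v v'
                  then (1 : ℝ) else 0) * (y v * y v')) :=
            Finset.sum_congr rfl fun v _ => Finset.sum_comm
        _ = ∑ t ∈ (Finset.univ : Finset (Fin (Fintype.card V - 1))).powerset, ∑ v : V, ∑ v' : V,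
              ((∏ k ∈ t, w k) * ∏ k ∈ Finset.univ \ t, (1 - w k)) *
                ((if ∀ k ∈ Finset.univ \ t, (G.state B0 (L.take ((k : Fin (Fintype.card V - 1)) : ℕ))).2 v v'
                  then (1 : ℝ) else 0) * (y v * y v')) :=
            Finset.sum_comm
        _ = ∑ t ∈ (Finset.univ : Finset (Fin (Fintype.card V - 1))).powerset,
              ((∏ k ∈ t, w k) * ∏ k ∈ Finset.univ \ t, (1 - w k)) *
                ∑ v : V, ∑ v' : V,
                  (if ∀ k ∈ Finset.univ \ t, (G.state B0 (L.take ((k : Fin (Fintype.card V - 1)) : ℕ))).2 v v'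
                    then (1 : ℝ) else 0) * (y v * y v') := by
            refine Finset.sum_congr rfl fun t _ => ?_
            rw [Finset.mul_sum]
            refine Finset.sum_congr rfl fun v _ => ?_
            rw [Finset.mul_sum]
    rw [heq]
    refine Finset.sum_nonneg fun t _ => mul_nonneg (hA t) ?_
    have h := equiv_indicator_nonneg (hRt t) y
    refine le_of_le_of_eq h (Finset.sum_congr rfl fun v _ =>
      Finset.sum_congr rfl fun v' _ => ?_)
    exact congrArg (fun i => @ite ℝ _ i (1 : ℝ) 0 * (y v * y v')) (Subsingleton.elim _ _)
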